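/- Assume S and B Bᵀ are positive definite. Then for every positive definite P ∈ ℝ^{d×d}: (i) K(P) B = (P⁻¹ + S)⁻¹ S; (ii) λ_max(R̂(P)) ≤ (λ_max(R₀)/λ_min(B Bᵀ)) · (λ_max(S)/λ_min(S))²; (iii) Tr(Â(P) P Â(P)ᵀ) ≤ Tr(S)/λ_min(S)²; (iv) if moreover P ≥ R in Loewner order, then R̂(P) ≥ (λ_min(R₀) λ_min(S)² / (λ_max(B Bᵀ) λ_max(R⁻¹ + S))) · (R⁻¹ + S)⁻¹. -/

import Mathlib

open Matrix

noncomputable section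

/-- The largest eigenvalue of a symmetric matrix, via the Rayleigh
variational characterization. -/
def lamMax {d : ℕ} (M : Matrix (Fin d) (Fin d) ℝ) : ℝ :=
  sSup {r | ∃ x : Fin d → ℝ, x ⬝ᵥ x = 1 ∧ r = x ⬝ᵥ M.mulVec x}

/-- The smallest eigenvalue of a symmetric matrix, via the Rayleigh
variational characterization. -/
def lamMin {d : ℕ} (M : Matrix (Fin d) (Fin d) ℝ) : ℝ :=
  sInf {r | ∃ x : Fin d → ℝ, x ⬝ᵥ x = 1 ∧ r = x ⬝ᵥ M.mulVec x}

namespace S13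

variable {n m p : ℕ}

lemma star_vec (x : Fin n → ℝ) : star x = x := by simp

lemma dp_self_nonneg (x : Fin n → ℝ) : 0 ≤ x ⬝ᵥ x :=
  Finset.sum_nonneg fun i _ => mul_self_nonneg (x i)

lemma dp_self_pos {x : Fin n → ℝ} (hx : x ≠ 0) : 0 < x ⬝ᵥ x :=
  lt_of_le_of_ne (dp_self_nonneg x) (Ne.symm (fun h => hx (dotProduct_self_eq_zero.mp h)))

lemma cs (u v : Fin n → ℝ) : (u ⬝ᵥ v) ^ 2 ≤ (u ⬝ᵥ u) * (v ⬝ᵥ v) := by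
  have h := Finset.sum_mul_sq_le_sq_mul_sq Finset.univ u v
  simp only [dotProduct, ← pow_two]
  exact h

lemma dp_conj (E F : Matrix (Fin p) (Fin n) ℝ) (x y : Fin n → ℝ) :
    (E *ᵥ x) ⬝ᵥ (F *ᵥ y) = x ⬝ᵥ ((Eᵀ * F) *ᵥ y) := by
  rw [← Matrix.mulVec_mulVec, Matrix.dotProduct_mulVec x, Matrix.vecMul_transpose]

lemma quad_conj (Q : Matrix (Fin m) (Fin n) ℝ) (A : Matrix (Fin n) (Fin n) ℝ) (x : Fin m → ℝ) :
    x ⬝ᵥ ((Q * A * Qᵀ) *ᵥ x) = (Qᵀ *ᵥ x) ⬝ᵥ (A *ᵥ (Qᵀ *ᵥ x)) := by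
  rw [← Matrix.mulVec_mulVec, ← Matrix.mulVec_mulVec, Matrix.dotProduct_mulVec x,
    ← Matrix.mulVec_transpose]

/-- transitivity of the Loewner order -/
lemma loe_trans {A B C : Matrix (Fin n) (Fin n) ℝ}
    (h1 : (B - A).PosSemidef) (h2 : (C - B).PosSemidef) : (C - A).PosSemidef := by
  simpa [sub_add_sub_cancel] using h2.add h1

lemma psd_smul {c : ℝ} (hc : 0 ≤ c) {A : Matrix (Fin n) (Fin n) ℝ} (hA : A.PosSemidef) :
    (c • A).PosSemidef := by
  refine PosSemidef.of_dotProduct_mulVec_nonneg ?_ fun x => ?_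
  · have : (c • A)ᴴ = c • A := by
      rw [Matrix.conjTranspose_smul, hA.1]; norm_num
    exact this
  · have h2 := hA.dotProduct_mulVec_nonneg x
    simp only [Matrix.smul_mulVec, dotProduct_smul, smul_eq_mul]
    exact mul_nonneg hc h2

lemma smul_loe {c : ℝ} (hc : 0 ≤ c) {A B : Matrix (Fin n) (Fin n) ℝ}
    (h : (B - A).PosSemidef) : (c • B - c • A).PosSemidef := by
  rw [← smul_sub]; exact psd_smul hc h

lemma conj_loe {A B : Matrix (Fin n) (Fin n) ℝ} (h : (B - A).PosSemidef)
    (E : Matrix (Fin m) (Fin n) ℝ) : (E * B * Eᵀ - E * A * Eᵀ).PosSemidef := by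
  have h2 := h.mul_mul_conjTranspose_same E
  rw [Matrix.conjTranspose_eq_transpose_of_trivial] at h2
  simpa [Matrix.sub_mul, Matrix.mul_sub] using h2

lemma trace_loe {A B : Matrix (Fin n) (Fin n) ℝ} (h : (B - A).PosSemidef) :
    A.trace ≤ B.trace := by
  have key : (0:ℝ) ≤ (B - A).trace := by
    rw [Matrix.trace]
    refine Finset.sum_nonneg fun i _ => ?_
    have h2 := h.dotProduct_mulVec_nonneg (Pi.single i 1)
    simpa [single_dotProduct, Matrix.mulVec_single, Matrix.diag] using h2
  rw [Matrix.trace_sub] at key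
  linarith

/-! ### Rayleigh quotient facts -/

def RS (M : Matrix (Fin n) (Fin n) ℝ) : Set ℝ :=
  {r | ∃ x : Fin n → ℝ, x ⬝ᵥ x = 1 ∧ r = x ⬝ᵥ M.mulVec x}

lemma lamMax_eq (M : Matrix (Fin n) (Fin n) ℝ) : lamMax M = sSup (RS M) := rfl
lemma lamMin_eq (M : Matrix (Fin n) (Fin n) ℝ) : lamMin M = sInf (RS M) := rfl

lemma unit_vec (hd : 1 ≤ n) :
    ∃ e : Fin n → ℝ, e ⬝ᵥ e = 1 ∧ e ≠ 0 := by
  refine ⟨Pi.single ⟨0, hd⟩ 1, ?_, ?_⟩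
  · simp [single_dotProduct]
  · intro h
    have := congrFun h ⟨0, hd⟩
    simp at this

lemma RS_nonempty (hd : 1 ≤ n) (M : Matrix (Fin n) (Fin n) ℝ) : (RS M).Nonempty := by
  obtain ⟨e, he, -⟩ := unit_vec hd
  exact ⟨_, e, he, rfl⟩

lemma abs_le_one_of_unit {x : Fin n → ℝ} (hx : x ⬝ᵥ x = 1) (i : Fin n) : |x i| ≤ 1 := by
  have h1 : x i * x i ≤ ∑ j, x j * x j :=
    Finset.single_le_sum (fun j _ => mul_self_nonneg (x j)) (Finset.mem_univ i)
  have h2 : x i * x i ≤ 1 := by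
    rwa [show ∑ j, x j * x j = x ⬝ᵥ x from rfl, hx] at h1
  nlinarith [abs_nonneg (x i), abs_mul_abs_self (x i)]

lemma rayleigh_abs_le (M : Matrix (Fin n) (Fin n) ℝ) {x : Fin n → ℝ} (hx : x ⬝ᵥ x = 1) :
    |x ⬝ᵥ M *ᵥ x| ≤ ∑ i, ∑ j, |M i j| := by
  have he : x ⬝ᵥ M *ᵥ x = ∑ i, ∑ j, x i * (M i j * x j) := by
    simp [dotProduct, Matrix.mulVec, Finset.mul_sum]
  rw [he]
  refine (Finset.abs_sum_le_sum_abs _ _).trans ?_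
  refine Finset.sum_le_sum fun i _ => ?_
  refine (Finset.abs_sum_le_sum_abs _ _).trans ?_
  refine Finset.sum_le_sum fun j _ => ?_
  rw [abs_mul, abs_mul]
  calc |x i| * (|M i j| * |x j|) ≤ 1 * (|M i j| * 1) := by
        have h1 := abs_le_one_of_unit hx i
        have h2 := abs_le_one_of_unit hx j
        have h3 := abs_nonneg (M i j)
        have hin : |M i j| * |x j| ≤ |M i j| * 1 := mul_le_mul_of_nonneg_left h2 h3
        exact mul_le_mul h1 hin (by positivity) (by norm_num)
    _ = |M i j| := by ring

lemma RS_bddAbove (M : Matrix (Fin n) (Fin n) ℝ) : BddAbove (RS M) := by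
  refine ⟨∑ i, ∑ j, |M i j|, ?_⟩
  rintro r ⟨x, hx, rfl⟩
  exact le_trans (le_abs_self _) (rayleigh_abs_le M hx)

lemma RS_bddBelow (M : Matrix (Fin n) (Fin n) ℝ) : BddBelow (RS M) := by
  refine ⟨-∑ i, ∑ j, |M i j|, ?_⟩
  rintro r ⟨x, hx, rfl⟩
  exact le_trans (neg_le_neg (rayleigh_abs_le M hx)) (neg_abs_le _)

lemma le_lamMax (M : Matrix (Fin n) (Fin n) ℝ) {x : Fin n → ℝ} (hx : x ⬝ᵥ x = 1) :
    x ⬝ᵥ M *ᵥ x ≤ lamMax M :=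
  le_csSup (RS_bddAbove M) ⟨x, hx, rfl⟩

lemma lamMin_le (M : Matrix (Fin n) (Fin n) ℝ) {x : Fin n → ℝ} (hx : x ⬝ᵥ x = 1) :
    lamMin M ≤ x ⬝ᵥ M *ᵥ x :=
  csInf_le (RS_bddBelow M) ⟨x, hx, rfl⟩

lemma lamMax_le (hd : 1 ≤ n) {M : Matrix (Fin n) (Fin n) ℝ} {c : ℝ}
    (h : ∀ x : Fin n → ℝ, x ⬝ᵥ x = 1 → x ⬝ᵥ M *ᵥ x ≤ c) : lamMax M ≤ c :=
  csSup_le (RS_nonempty hd M) (by rintro r ⟨x, hx, rfl⟩; exact h x hx)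

lemma le_lamMin (hd : 1 ≤ n) {M : Matrix (Fin n) (Fin n) ℝ} {c : ℝ}
    (h : ∀ x : Fin n → ℝ, x ⬝ᵥ x = 1 → c ≤ x ⬝ᵥ M *ᵥ x) : c ≤ lamMin M :=
  le_csInf (RS_nonempty hd M) (by rintro r ⟨x, hx, rfl⟩; exact h x hx)

lemma rayleigh_le (M : Matrix (Fin n) (Fin n) ℝ) (w : Fin n → ℝ) :
    w ⬝ᵥ M *ᵥ w ≤ lamMax M * (w ⬝ᵥ w) := by
  rcases eq_or_ne w 0 with rfl | hw
  · simp
  · have hc : 0 < w ⬝ᵥ w := dp_self_pos hw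
    set t : ℝ := (Real.sqrt (w ⬝ᵥ w))⁻¹ with ht
    have ht2 : t * t * (w ⬝ᵥ w) = 1 := by
      rw [ht, ← mul_inv, Real.mul_self_sqrt hc.le, inv_mul_cancel₀ hc.ne']
    have hunit : (t • w) ⬝ᵥ (t • w) = 1 := by
      rw [smul_dotProduct, dotProduct_smul, smul_eq_mul, smul_eq_mul, ← mul_assoc,
        ht2]
    have h1 := le_lamMax M hunit
    rw [Matrix.mulVec_smul, smul_dotProduct, dotProduct_smul, smul_eq_mul,
      smul_eq_mul, ← mul_assoc] at h1
    have e : w ⬝ᵥ M *ᵥ w = (t * t * (w ⬝ᵥ w)) * (w ⬝ᵥ M *ᵥ w) := by rw [ht2, one_mul]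
    rw [e, show (t * t * (w ⬝ᵥ w)) * (w ⬝ᵥ M *ᵥ w) = (t * t * (w ⬝ᵥ M *ᵥ w)) * (w ⬝ᵥ w) by ring]
    exact mul_le_mul_of_nonneg_right h1 hc.le

lemma rayleigh_ge (M : Matrix (Fin n) (Fin n) ℝ) (w : Fin n → ℝ) :
    lamMin M * (w ⬝ᵥ w) ≤ w ⬝ᵥ M *ᵥ w := by
  rcases eq_or_ne w 0 with rfl | hw
  · simp
  · have hc : 0 < w ⬝ᵥ w := dp_self_pos hw
    set t : ℝ := (Real.sqrt (w ⬝ᵥ w))⁻¹ with ht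
    have ht2 : t * t * (w ⬝ᵥ w) = 1 := by
      rw [ht, ← mul_inv, Real.mul_self_sqrt hc.le, inv_mul_cancel₀ hc.ne']
    have hunit : (t • w) ⬝ᵥ (t • w) = 1 := by
      rw [smul_dotProduct, dotProduct_smul, smul_eq_mul, smul_eq_mul, ← mul_assoc,
        ht2]
    have h1 := lamMin_le M hunit
    rw [Matrix.mulVec_smul, smul_dotProduct, dotProduct_smul, smul_eq_mul,
      smul_eq_mul, ← mul_assoc] at h1
    have e : w ⬝ᵥ M *ᵥ w = (t * t * (w ⬝ᵥ w)) * (w ⬝ᵥ M *ᵥ w) := by rw [ht2, one_mul]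
    rw [e, show (t * t * (w ⬝ᵥ w)) * (w ⬝ᵥ M *ᵥ w) = (t * t * (w ⬝ᵥ M *ᵥ w)) * (w ⬝ᵥ w) by ring]
    exact mul_le_mul_of_nonneg_right h1 hc.le

end S13
namespace S13

open Matrix

variable {n m p : ℕ}

lemma herm_transpose {M : Matrix (Fin n) (Fin n) ℝ} (h : M.IsHermitian) : Mᵀ = M := by
  rw [← Matrix.conjTranspose_eq_transpose_of_trivial]; exact h

lemma herm_of_transpose {M : Matrix (Fin n) (Fin n) ℝ} (h : Mᵀ = M) : M.IsHermitian := by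
  rwa [Matrix.IsHermitian, Matrix.conjTranspose_eq_transpose_of_trivial]

lemma herm_smul_one (c : ℝ) : ((c • (1 : Matrix (Fin n) (Fin n) ℝ))).IsHermitian :=
  herm_of_transpose (by rw [Matrix.transpose_smul, Matrix.transpose_one])

lemma posdef_smul_one {c : ℝ} (hc : 0 < c) : (c • (1 : Matrix (Fin n) (Fin n) ℝ)).PosDef := by
  refine PosDef.of_dotProduct_mulVec_pos (herm_smul_one c) fun x hx => ?_
  rw [star_vec, Matrix.smul_mulVec, Matrix.one_mulVec, dotProduct_smul,
    smul_eq_mul]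
  exact mul_pos hc (dp_self_pos hx)

lemma smul_one_inv {c : ℝ} (hc : c ≠ 0) :
    (c • (1 : Matrix (Fin n) (Fin n) ℝ))⁻¹ = c⁻¹ • 1 := by
  apply Matrix.inv_eq_right_inv
  rw [Matrix.smul_mul, Matrix.mul_smul, one_mul, smul_smul, mul_inv_cancel₀ hc, one_smul]

/-- `M ≤ lamMax M • 1` for Hermitian `M`. -/
lemma loe_lamMax_smul_one {M : Matrix (Fin n) (Fin n) ℝ} (hM : M.IsHermitian) :
    (lamMax M • 1 - M).PosSemidef := by
  refine PosSemidef.of_dotProduct_mulVec_nonneg ((herm_smul_one _).sub hM) fun x => ?_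
  rw [star_vec, Matrix.sub_mulVec, dotProduct_sub, Matrix.smul_mulVec,
    Matrix.one_mulVec, dotProduct_smul, smul_eq_mul]
  have := rayleigh_le M x
  linarith [mul_comm (lamMax M) (x ⬝ᵥ x)]

/-- `lamMin M • 1 ≤ M` for Hermitian `M`. -/
lemma lamMin_smul_one_loe {M : Matrix (Fin n) (Fin n) ℝ} (hM : M.IsHermitian) :
    (M - lamMin M • 1).PosSemidef := by
  refine PosSemidef.of_dotProduct_mulVec_nonneg (hM.sub (herm_smul_one _)) fun x => ?_
  rw [star_vec, Matrix.sub_mulVec, dotProduct_sub, Matrix.smul_mulVec,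
    Matrix.one_mulVec, dotProduct_smul, smul_eq_mul]
  have := rayleigh_ge M x
  linarith [mul_comm (lamMin M) (x ⬝ᵥ x)]

lemma lamMax_pos (hd : 1 ≤ n) {M : Matrix (Fin n) (Fin n) ℝ} (hM : M.PosDef) :
    0 < lamMax M := by
  obtain ⟨e, he, hne⟩ := unit_vec hd
  have h1 := hM.dotProduct_mulVec_pos hne
  rw [star_vec] at h1
  exact lt_of_lt_of_le h1 (le_lamMax M he)

lemma lamMax_mono (hd : 1 ≤ n) {M N : Matrix (Fin n) (Fin n) ℝ}
    (h : (N - M).PosSemidef) : lamMax M ≤ lamMax N := by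
  refine lamMax_le hd fun x hx => ?_
  have h1 := h.dotProduct_mulVec_nonneg x
  rw [star_vec, Matrix.sub_mulVec, dotProduct_sub] at h1
  linarith [le_lamMax N hx]

lemma lamMax_le_of_loe_smul_one (hd : 1 ≤ n) {M : Matrix (Fin n) (Fin n) ℝ} {c : ℝ}
    (h : (c • 1 - M).PosSemidef) : lamMax M ≤ c := by
  refine lamMax_le hd fun x hx => ?_
  have h1 := h.dotProduct_mulVec_nonneg x
  rw [star_vec, Matrix.sub_mulVec, dotProduct_sub, Matrix.smul_mulVec,
    Matrix.one_mulVec, dotProduct_smul, smul_eq_mul, hx, mul_one] at h1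
  linarith

/-! ### Inverses and square roots -/

lemma isUnit_det_of_posdef {M : Matrix (Fin n) (Fin n) ℝ} (hM : M.PosDef) : IsUnit M.det :=
  isUnit_iff_ne_zero.mpr hM.det_pos.ne'

open scoped MatrixOrder in
def _root_.Matrix.PosSemidef.sqrt {M : Matrix (Fin n) (Fin n) ℝ} (_hM : M.PosSemidef) :
    Matrix (Fin n) (Fin n) ℝ := CFC.sqrt M

open scoped MatrixOrder in
lemma _root_.Matrix.PosSemidef.posSemidef_sqrt {M : Matrix (Fin n) (Fin n) ℝ}
    (hM : M.PosSemidef) : hM.sqrt.PosSemidef :=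
  Matrix.nonneg_iff_posSemidef.mp (CFC.sqrt_nonneg M)

open scoped MatrixOrder in
lemma _root_.Matrix.PosSemidef.sqrt_mul_self {M : Matrix (Fin n) (Fin n) ℝ}
    (hM : M.PosSemidef) : hM.sqrt * hM.sqrt = M :=
  CFC.sqrt_mul_sqrt_self M (Matrix.nonneg_iff_posSemidef.mpr hM)

lemma sqrt_transpose {M : Matrix (Fin n) (Fin n) ℝ} (hM : M.PosSemidef) :
    (hM.sqrt)ᵀ = hM.sqrt :=
  herm_transpose hM.posSemidef_sqrt.1

lemma isUnit_sqrt {M : Matrix (Fin n) (Fin n) ℝ} (hM : M.PosDef) :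
    IsUnit hM.posSemidef.sqrt := by
  rw [Matrix.isUnit_iff_isUnit_det, isUnit_iff_ne_zero]
  intro h
  have : (hM.posSemidef.sqrt * hM.posSemidef.sqrt).det = M.det := by
    rw [hM.posSemidef.sqrt_mul_self]
  rw [Matrix.det_mul, h, mul_zero] at this
  exact hM.det_pos.ne this

/-- `T * M * T = M * M` for `T = sqrt M`. -/
lemma conj_self_aux {M T : Matrix (Fin n) (Fin n) ℝ} (h : T * T = M) :
    T * M * T = M * M := by
  subst h; simp only [Matrix.mul_assoc]

lemma sqrt_conj_self {M : Matrix (Fin n) (Fin n) ℝ} (hM : M.PosSemidef) :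
    hM.sqrt * M * hM.sqrt = M * M :=
  conj_self_aux hM.sqrt_mul_self

/-- For positive definite `X`, `sqrt (X⁻¹) * X * sqrt (X⁻¹) = 1`. -/
lemma sqrt_inv_conj {X : Matrix (Fin n) (Fin n) ℝ} (hX : X.PosDef) :
    hX.inv.posSemidef.sqrt * X * hX.inv.posSemidef.sqrt = 1 := by
  set Q := hX.inv.posSemidef.sqrt with hQ
  have hQQ : Q * Q = X⁻¹ := hX.inv.posSemidef.sqrt_mul_self
  have hXdet := isUnit_det_of_posdef hX
  have h1 : Q * (Q * X) = 1 := by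
    rw [← Matrix.mul_assoc, hQQ, Matrix.nonsing_inv_mul _ hXdet]
  have hQu : IsUnit Q.det := (Matrix.isUnit_iff_isUnit_det _).mp (isUnit_sqrt hX.inv)
  have e1 : Q⁻¹ = Q * X := Matrix.inv_eq_right_inv h1
  rw [show Q * X * Q = (Q * X) * Q from rfl, ← e1, Matrix.nonsing_inv_mul _ hQu]

lemma posdef_conj {A Q : Matrix (Fin n) (Fin n) ℝ} (hA : A.PosDef) (hQ : IsUnit Q) :
    (Q * A * Qᵀ).PosDef := by
  refine PosDef.of_dotProduct_mulVec_pos ?_ fun x hx => ?_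
  · have h1 := (hA.posSemidef.mul_mul_conjTranspose_same Q).1
    rwa [Matrix.conjTranspose_eq_transpose_of_trivial] at h1
  · rw [star_vec, quad_conj]
    have hQt : IsUnit Qᵀ := by
      rw [Matrix.isUnit_iff_isUnit_det, Matrix.det_transpose]
      exact (Matrix.isUnit_iff_isUnit_det Q).mp hQ
    have hinj := Matrix.mulVec_injective_iff_isUnit.mpr hQt
    have hne : Qᵀ *ᵥ x ≠ 0 := by
      intro h
      apply hx
      have h0 : Qᵀ *ᵥ (0 : Fin n → ℝ) = 0 := Matrix.mulVec_zero _
      exact hinj (h.trans h0.symm)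
    have := hA.dotProduct_mulVec_pos hne
    rwa [star_vec] at this

/-- From `X ≤ 1` with `X` positive definite, conclude `1 ≤ X⁻¹`. -/
lemma one_loe_inv {X : Matrix (Fin n) (Fin n) ℝ} (hX : X.PosDef)
    (h : ((1 : Matrix (Fin n) (Fin n) ℝ) - X).PosSemidef) :
    (X⁻¹ - 1).PosSemidef := by
  set Y := hX.inv.posSemidef.sqrt with hY
  have hYY : Y * Y = X⁻¹ := hX.inv.posSemidef.sqrt_mul_self
  have hYt : Yᵀ = Y := sqrt_transpose hX.inv.posSemidef
  have h2 := conj_loe h Y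
  rw [hYt, Matrix.mul_one, hYY, sqrt_inv_conj hX] at h2
  exact h2

/-- Loewner inverse antitonicity: `A ≤ B` implies `B⁻¹ ≤ A⁻¹`. -/
lemma inv_loe_inv {A B : Matrix (Fin n) (Fin n) ℝ} (hA : A.PosDef) (hB : B.PosDef)
    (h : (B - A).PosSemidef) : (A⁻¹ - B⁻¹).PosSemidef := by
  set Q := hB.inv.posSemidef.sqrt with hQ
  have hQQ : Q * Q = B⁻¹ := hB.inv.posSemidef.sqrt_mul_self
  have hQt : Qᵀ = Q := sqrt_transpose hB.inv.posSemidef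
  have hQu : IsUnit Q := isUnit_sqrt hB.inv
  have hQud : IsUnit Q.det := (Matrix.isUnit_iff_isUnit_det _).mp hQu
  have h1 := conj_loe h Q
  rw [hQt, sqrt_inv_conj hB] at h1
  have hX : (Q * A * Q).PosDef := by
    have := posdef_conj hA hQu
    rwa [hQt] at this
  have h2 := one_loe_inv hX h1
  have h3 := conj_loe h2 Q
  rw [hQt, Matrix.mul_one, hQQ] at h3
  have e : Q * (Q * A * Q)⁻¹ * Q = A⁻¹ := by
    rw [Matrix.mul_inv_rev, Matrix.mul_inv_rev]
    have hq : Q * Q⁻¹ = 1 := Matrix.mul_nonsing_inv _ hQud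
    calc Q * (Q⁻¹ * (A⁻¹ * Q⁻¹)) * Q = (Q * Q⁻¹) * A⁻¹ * (Q⁻¹ * Q) := by
          simp only [Matrix.mul_assoc]
      _ = A⁻¹ := by rw [hq, Matrix.nonsing_inv_mul _ hQud, Matrix.one_mul, Matrix.mul_one]
  rw [e] at h3
  exact h3

/-- If `X` is PSD and `X ≤ c • 1` then `X * X ≤ c • X`. -/
lemma sq_loe_of_le {X : Matrix (Fin n) (Fin n) ℝ} (hX : X.PosSemidef) {c : ℝ}
    (h : (c • 1 - X).PosSemidef) : (c • X - X * X).PosSemidef := by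
  set T := hX.sqrt with hT
  have hTt : Tᵀ = T := sqrt_transpose hX
  have h2 := conj_loe h T
  rw [hTt, sqrt_conj_self hX] at h2
  have e : T * (c • 1) * T = c • X := by
    rw [Matrix.mul_smul, Matrix.mul_one, Matrix.smul_mul, hX.sqrt_mul_self]
  rw [e] at h2
  exact h2

/-- If `X` is PSD and `c • 1 ≤ X` then `c • X ≤ X * X`. -/
lemma sq_loe_of_ge {X : Matrix (Fin n) (Fin n) ℝ} (hX : X.PosSemidef) {c : ℝ}
    (h : (X - c • 1).PosSemidef) : (X * X - c • X).PosSemidef := by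
  set T := hX.sqrt with hT
  have hTt : Tᵀ = T := sqrt_transpose hX
  have h2 := conj_loe h T
  rw [hTt, sqrt_conj_self hX] at h2
  have e : T * (c • 1) * T = c • X := by
    rw [Matrix.mul_smul, Matrix.mul_one, Matrix.smul_mul, hX.sqrt_mul_self]
  rw [e] at h2
  exact h2

lemma lamMin_pos (hd : 1 ≤ n) {M : Matrix (Fin n) (Fin n) ℝ} (hM : M.PosDef) :
    0 < lamMin M := by
  have hMinv := hM.inv
  have hcmax : 0 < lamMax M⁻¹ := lamMax_pos hd hMinv
  have key : (lamMax M⁻¹)⁻¹ ≤ lamMin M := by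
    refine le_lamMin hd fun x hx => ?_
    set T := hM.posSemidef.sqrt with hT
    have hTt : Tᵀ = T := sqrt_transpose hM.posSemidef
    have hTu : IsUnit T := isUnit_sqrt hM
    have hTud : IsUnit T.det := (Matrix.isUnit_iff_isUnit_det _).mp hTu
    have huv : (T *ᵥ x) ⬝ᵥ (T⁻¹ *ᵥ x) = 1 := by
      rw [dp_conj, hTt, Matrix.mul_nonsing_inv _ hTud, Matrix.one_mulVec, hx]
    have huu : (T *ᵥ x) ⬝ᵥ (T *ᵥ x) = x ⬝ᵥ M *ᵥ x := by
      rw [dp_conj, hTt, hM.posSemidef.sqrt_mul_self]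
    have hvv : (T⁻¹ *ᵥ x) ⬝ᵥ (T⁻¹ *ᵥ x) = x ⬝ᵥ M⁻¹ *ᵥ x := by
      rw [dp_conj, Matrix.transpose_nonsing_inv, hTt, ← Matrix.mul_inv_rev,
        hM.posSemidef.sqrt_mul_self]
    have hCS := cs (T *ᵥ x) (T⁻¹ *ᵥ x)
    rw [huv, huu, hvv] at hCS
    have h1 : x ⬝ᵥ M⁻¹ *ᵥ x ≤ lamMax M⁻¹ := by
      have := le_lamMax M⁻¹ hx; linarith
    have h2 : 0 ≤ x ⬝ᵥ M *ᵥ x := by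
      have := hM.posSemidef.dotProduct_mulVec_nonneg x; rwa [star_vec] at this
    have h3 : 1 ≤ (x ⬝ᵥ M *ᵥ x) * lamMax M⁻¹ := by
      calc (1:ℝ) = 1 ^ 2 := by norm_num
        _ ≤ (x ⬝ᵥ M *ᵥ x) * (x ⬝ᵥ M⁻¹ *ᵥ x) := hCS
        _ ≤ (x ⬝ᵥ M *ᵥ x) * lamMax M⁻¹ := mul_le_mul_of_nonneg_left h1 h2
    rw [inv_le_iff_one_le_mul₀' hcmax]
    linarith
  exact lt_of_lt_of_le (by positivity) key

end S13
set_option maxHeartbeats 1000000 in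
open S13 in
theorem statement13 {d d₀ : ℕ} (hd : 1 ≤ d) (hd₀ : 1 ≤ d₀)
    (A : Matrix (Fin d) (Fin d) ℝ) (B : Matrix (Fin d₀) (Fin d) ℝ)
    (R : Matrix (Fin d) (Fin d) ℝ) (R₀ : Matrix (Fin d₀) (Fin d₀) ℝ)
    (hR : R.PosDef) (hR₀ : R₀.PosDef)
    (S : Matrix (Fin d) (Fin d) ℝ) (hSdef : S = Bᵀ * R₀⁻¹ * B)
    (hS : S.PosDef) (hBBt : (B * Bᵀ).PosDef)
    (K : Matrix (Fin d) (Fin d) ℝ → Matrix (Fin d) (Fin d₀) ℝ)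
    (hK : ∀ Q, K Q = Q * Bᵀ * (B * Q * Bᵀ + R₀)⁻¹)
    (Ahat Rhat : Matrix (Fin d) (Fin d) ℝ → Matrix (Fin d) (Fin d) ℝ)
    (hAhat : ∀ Q, Ahat Q = 1 - K Q * B)
    (hRhat : ∀ Q, Rhat Q = K Q * R₀ * (K Q)ᵀ)
    (P : Matrix (Fin d) (Fin d) ℝ) (hP : P.PosDef) :
    K P * B = (P⁻¹ + S)⁻¹ * S ∧
    lamMax (Rhat P) ≤ (lamMax R₀ / lamMin (B * Bᵀ)) * (lamMax S / lamMin S) ^ 2 ∧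
    Matrix.trace (Ahat P * P * (Ahat P)ᵀ) ≤ Matrix.trace S / lamMin S ^ 2 ∧
    ((P - R).PosSemidef →
      (Rhat P - (lamMin R₀ * lamMin S ^ 2 / (lamMax (B * Bᵀ) * lamMax (R⁻¹ + S))) •
        (R⁻¹ + S)⁻¹).PosSemidef) := by
  have hPdet := isUnit_det_of_posdef hP
  have hR0det := isUnit_det_of_posdef hR₀
  set M : Matrix (Fin d) (Fin d) ℝ := P⁻¹ + S with hMdef
  have hM : M.PosDef := hP.inv.add hS
  have hMdet := isUnit_det_of_posdef hM
  have hMt : Mᵀ = M := herm_transpose hM.1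
  have hMinvT : M⁻¹ᵀ = M⁻¹ := by rw [Matrix.transpose_nonsing_inv, hMt]
  have hR0invT : R₀⁻¹ᵀ = R₀⁻¹ := by
    rw [Matrix.transpose_nonsing_inv, herm_transpose hR₀.1]
  have hBPB : (B * P * Bᵀ).PosSemidef := by
    have h2 := hP.posSemidef.mul_mul_conjTranspose_same B
    rwa [Matrix.conjTranspose_eq_transpose_of_trivial] at h2
  have hN : (B * P * Bᵀ + R₀).PosDef := Matrix.PosDef.posSemidef_add hBPB hR₀
  have hNdet := isUnit_det_of_posdef hN
  have key : M * (P * Bᵀ) = Bᵀ * R₀⁻¹ * (B * P * Bᵀ + R₀) := by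
    rw [hMdef, hSdef, Matrix.add_mul, Matrix.mul_add,
      ← Matrix.mul_assoc P⁻¹ P Bᵀ, Matrix.nonsing_inv_mul _ hPdet, Matrix.one_mul]
    have e1 : Bᵀ * R₀⁻¹ * B * (P * Bᵀ) = Bᵀ * R₀⁻¹ * (B * P * Bᵀ) := by
      simp only [Matrix.mul_assoc]
    have e2 : Bᵀ * R₀⁻¹ * R₀ = Bᵀ := by
      rw [Matrix.mul_assoc, Matrix.nonsing_inv_mul _ hR0det, Matrix.mul_one]
    rw [e1, e2, add_comm]
  have hPB : P * Bᵀ = M⁻¹ * (Bᵀ * R₀⁻¹ * (B * P * Bᵀ + R₀)) := by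
    rw [← key, ← Matrix.mul_assoc, Matrix.nonsing_inv_mul _ hMdet, Matrix.one_mul]
  have hKP : K P = M⁻¹ * Bᵀ * R₀⁻¹ := by
    rw [hK, hPB]
    simp only [Matrix.mul_assoc]
    have hNdet' : IsUnit (B * (P * Bᵀ) + R₀).det := by rwa [← Matrix.mul_assoc]
    rw [Matrix.mul_nonsing_inv _ hNdet', Matrix.mul_one]
  have goal1 : K P * B = M⁻¹ * S := by
    rw [hKP, hSdef]; simp only [Matrix.mul_assoc]
  have hRhatP : Rhat P = M⁻¹ * S * M⁻¹ := by
    rw [hRhat, hKP, Matrix.transpose_mul, Matrix.transpose_mul, hR0invT, hMinvT,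
      Matrix.transpose_transpose, hSdef]
    simp only [Matrix.mul_assoc]
    rw [show R₀ * (R₀⁻¹ * (B * M⁻¹)) = B * M⁻¹ by
      rw [← Matrix.mul_assoc R₀ R₀⁻¹ (B * M⁻¹), Matrix.mul_nonsing_inv _ hR0det,
        Matrix.one_mul]]
  have hAhatP : Ahat P = M⁻¹ * P⁻¹ := by
    rw [hAhat, goal1]
    have e3 : P⁻¹ = M - S := by rw [hMdef]; abel
    rw [e3, Matrix.mul_sub, Matrix.nonsing_inv_mul _ hMdet]
  have hPinvT : P⁻¹ᵀ = P⁻¹ := by rw [Matrix.transpose_nonsing_inv, herm_transpose hP.1]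
  have hAPA : Ahat P * P * (Ahat P)ᵀ = M⁻¹ * P⁻¹ * M⁻¹ := by
    rw [hAhatP, Matrix.transpose_mul, hMinvT, hPinvT]
    simp only [Matrix.mul_assoc]
    rw [show P⁻¹ * (P * (P⁻¹ * M⁻¹)) = P⁻¹ * M⁻¹ by
      rw [← Matrix.mul_assoc P P⁻¹ M⁻¹, Matrix.mul_nonsing_inv _ hPdet, Matrix.one_mul]]
  -- scalars
  have ha : 0 < lamMin S := lamMin_pos hd hS
  have hamax : 0 < lamMax S := lamMax_pos hd hS
  have hr0min : 0 < lamMin R₀ := lamMin_pos hd₀ hR₀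
  have hr0max : 0 < lamMax R₀ := lamMax_pos hd₀ hR₀
  have hbmin : 0 < lamMin (B * Bᵀ) := lamMin_pos hd₀ hBBt
  have hbmax : 0 < lamMax (B * Bᵀ) := lamMax_pos hd₀ hBBt
  -- shared Loewner facts
  have hMinv : M⁻¹.PosDef := hM.inv
  have hSM : (M - S).PosSemidef := by
    have e4 : M - S = P⁻¹ := by rw [hMdef]; abel
    rw [e4]; exact hP.inv.posSemidef
  have hMS : (S⁻¹ - M⁻¹).PosSemidef := inv_loe_inv hS hM hSM
  have haS : (S - lamMin S • 1).PosSemidef := lamMin_smul_one_loe hS.1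
  have hSa : ((lamMin S)⁻¹ • 1 - S⁻¹).PosSemidef := by
    have h2 := inv_loe_inv (posdef_smul_one ha) hS haS
    rwa [smul_one_inv ha.ne'] at h2
  have u2 : ((lamMin S)⁻¹ • 1 - M⁻¹).PosSemidef := loe_trans hMS hSa
  -- part (iii)
  have t1 : (M⁻¹ - M⁻¹ * P⁻¹ * M⁻¹).PosSemidef := by
    have hMP : (M - P⁻¹).PosSemidef := by
      have e5 : M - P⁻¹ = S := by rw [hMdef]; abel
      rw [e5]; exact hS.posSemidef
    have h2 := conj_loe hMP M⁻¹
    rw [hMinvT, show M⁻¹ * M * M⁻¹ = M⁻¹ by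
      rw [Matrix.nonsing_inv_mul _ hMdet, Matrix.one_mul]] at h2
    exact h2
  have t2 : ((lamMin S)⁻¹ • 1 - M⁻¹ * P⁻¹ * M⁻¹).PosSemidef := loe_trans t1 u2
  have t4 : (((lamMin S)⁻¹ * (lamMin S)⁻¹) • S
      - (lamMin S)⁻¹ • (1 : Matrix (Fin d) (Fin d) ℝ)).PosSemidef := by
    have h2 := psd_smul (show (0:ℝ) ≤ (lamMin S)⁻¹ * (lamMin S)⁻¹ by positivity) haS
    rw [smul_sub, smul_smul,
      show (lamMin S)⁻¹ * (lamMin S)⁻¹ * lamMin S = (lamMin S)⁻¹ by field_simp] at h2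
    exact h2
  have t5 := loe_trans t2 t4
  have goal3 : Matrix.trace (Ahat P * P * (Ahat P)ᵀ) ≤ Matrix.trace S / lamMin S ^ 2 := by
    rw [hAPA]
    have h2 := trace_loe t5
    rw [Matrix.trace_smul, smul_eq_mul] at h2
    calc Matrix.trace (M⁻¹ * P⁻¹ * M⁻¹) ≤ (lamMin S)⁻¹ * (lamMin S)⁻¹ * Matrix.trace S := h2
      _ = Matrix.trace S / lamMin S ^ 2 := by
          rw [pow_two, div_eq_mul_inv, mul_inv]; ring
  -- part (ii)
  have haSmax : (lamMax S • 1 - S).PosSemidef := loe_lamMax_smul_one hS.1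
  have A1 : (lamMax S • (M⁻¹ * M⁻¹) - M⁻¹ * S * M⁻¹).PosSemidef := by
    have h2 := conj_loe haSmax M⁻¹
    rw [hMinvT, show M⁻¹ * (lamMax S • 1) * M⁻¹ = lamMax S • (M⁻¹ * M⁻¹) by
      rw [Matrix.mul_smul, Matrix.mul_one, Matrix.smul_mul]] at h2
    exact h2
  have u3 : ((lamMin S)⁻¹ • M⁻¹ - M⁻¹ * M⁻¹).PosSemidef :=
    sq_loe_of_le hMinv.posSemidef u2
  have A2 : ((lamMax S * (lamMin S)⁻¹) • M⁻¹ - lamMax S • (M⁻¹ * M⁻¹)).PosSemidef := by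
    have h2 := psd_smul hamax.le u3
    rw [smul_sub, smul_smul] at h2
    exact h2
  have A3 : ((lamMax S * (lamMin S)⁻¹ * (lamMin S)⁻¹) • (1 : Matrix (Fin d) (Fin d) ℝ)
      - (lamMax S * (lamMin S)⁻¹) • M⁻¹).PosSemidef := by
    have h2 := psd_smul (show (0:ℝ) ≤ lamMax S * (lamMin S)⁻¹ by positivity) u2
    rw [smul_sub, smul_smul] at h2
    exact h2
  have A4 := loe_trans (loe_trans A1 A2) A3
  have hlam2 : lamMax (Rhat P) ≤ lamMax S * (lamMin S)⁻¹ * (lamMin S)⁻¹ := by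
    rw [hRhatP]
    exact lamMax_le_of_loe_smul_one hd A4
  have key1 : lamMin (B * Bᵀ) ≤ lamMax R₀ * lamMax S := by
    obtain ⟨y, hy, hyne⟩ := unit_vec hd₀
    have hGt : (B * Bᵀ)ᵀ = B * Bᵀ := herm_transpose hBBt.1
    obtain ⟨w, hw⟩ : ∃ w : Fin d → ℝ, w = Bᵀ *ᵥ y := ⟨_, rfl⟩
    have hc : w ⬝ᵥ w = y ⬝ᵥ (B * Bᵀ) *ᵥ y := by
      rw [hw, dp_conj, Matrix.transpose_transpose]
    have hyG : lamMin (B * Bᵀ) ≤ y ⬝ᵥ (B * Bᵀ) *ᵥ y := lamMin_le _ hy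
    have hcpos : 0 < w ⬝ᵥ w := by rw [hc]; linarith
    have hG2 : (B * Bᵀ * (B * Bᵀ) - lamMin (B * Bᵀ) • (B * Bᵀ)).PosSemidef :=
      sq_loe_of_ge hBBt.posSemidef (lamMin_smul_one_loe hBBt.1)
    have hBw : B *ᵥ w = (B * Bᵀ) *ᵥ y := by rw [hw, Matrix.mulVec_mulVec]
    have hGG : (B *ᵥ w) ⬝ᵥ (B *ᵥ w) = y ⬝ᵥ (B * Bᵀ * (B * Bᵀ)) *ᵥ y := by
      calc (B *ᵥ w) ⬝ᵥ (B *ᵥ w) = ((B * Bᵀ) *ᵥ y) ⬝ᵥ ((B * Bᵀ) *ᵥ y) := by rw [hBw]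
        _ = y ⬝ᵥ ((B * Bᵀ)ᵀ * (B * Bᵀ)) *ᵥ y := dp_conj (B * Bᵀ) (B * Bᵀ) y y
        _ = y ⬝ᵥ (B * Bᵀ * (B * Bᵀ)) *ᵥ y := by rw [hGt]
    have hBwBw : lamMin (B * Bᵀ) * (w ⬝ᵥ w) ≤ (B *ᵥ w) ⬝ᵥ (B *ᵥ w) := by
      have h2 := hG2.dotProduct_mulVec_nonneg y
      rw [star_vec, Matrix.sub_mulVec, dotProduct_sub, Matrix.smul_mulVec,
        dotProduct_smul, smul_eq_mul] at h2
      rw [hGG, hc]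
      linarith
    have hR0i : (R₀⁻¹ - (lamMax R₀)⁻¹ • 1).PosSemidef := by
      have h2 := inv_loe_inv hR₀ (posdef_smul_one hr0max) (loe_lamMax_smul_one hR₀.1)
      rwa [smul_one_inv hr0max.ne'] at h2
    have hwSw : (lamMax R₀)⁻¹ * ((B *ᵥ w) ⬝ᵥ (B *ᵥ w)) ≤ w ⬝ᵥ S *ᵥ w := by
      have h2 := hR0i.dotProduct_mulVec_nonneg (B *ᵥ w)
      rw [star_vec, Matrix.sub_mulVec, dotProduct_sub, Matrix.smul_mulVec,
        Matrix.one_mulVec, dotProduct_smul, smul_eq_mul] at h2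
      have e6 : (B *ᵥ w) ⬝ᵥ (R₀⁻¹ *ᵥ (B *ᵥ w)) = w ⬝ᵥ S *ᵥ w := by
        calc (B *ᵥ w) ⬝ᵥ (R₀⁻¹ *ᵥ (B *ᵥ w))
            = (B *ᵥ w) ⬝ᵥ ((R₀⁻¹ * B) *ᵥ w) := by rw [Matrix.mulVec_mulVec]
          _ = w ⬝ᵥ ((Bᵀ * (R₀⁻¹ * B)) *ᵥ w) := dp_conj B (R₀⁻¹ * B) w w
          _ = w ⬝ᵥ S *ᵥ w := by rw [hSdef, Matrix.mul_assoc]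
      rw [← e6]
      linarith
    have hfin : lamMin (B * Bᵀ) * (w ⬝ᵥ w) * (lamMax R₀)⁻¹ ≤ lamMax S * (w ⬝ᵥ w) := by
      calc lamMin (B * Bᵀ) * (w ⬝ᵥ w) * (lamMax R₀)⁻¹
          ≤ ((B *ᵥ w) ⬝ᵥ (B *ᵥ w)) * (lamMax R₀)⁻¹ :=
            mul_le_mul_of_nonneg_right hBwBw (by positivity)
        _ = (lamMax R₀)⁻¹ * ((B *ᵥ w) ⬝ᵥ (B *ᵥ w)) := by ring
        _ ≤ w ⬝ᵥ S *ᵥ w := hwSw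
        _ ≤ lamMax S * (w ⬝ᵥ w) := rayleigh_le S w
    have hfin' : (lamMin (B * Bᵀ) * (lamMax R₀)⁻¹) * (w ⬝ᵥ w) ≤ lamMax S * (w ⬝ᵥ w) := by
      rw [show (lamMin (B * Bᵀ) * (lamMax R₀)⁻¹) * (w ⬝ᵥ w)
        = lamMin (B * Bᵀ) * (w ⬝ᵥ w) * (lamMax R₀)⁻¹ by ring]
      exact hfin
    have h3 := le_of_mul_le_mul_right hfin' hcpos
    calc lamMin (B * Bᵀ) = (lamMin (B * Bᵀ) * (lamMax R₀)⁻¹) * lamMax R₀ := by field_simp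
      _ ≤ lamMax S * lamMax R₀ := mul_le_mul_of_nonneg_right h3 hr0max.le
      _ = lamMax R₀ * lamMax S := by ring
  have goal2 : lamMax (Rhat P) ≤ (lamMax R₀ / lamMin (B * Bᵀ)) * (lamMax S / lamMin S) ^ 2 := by
    refine hlam2.trans ?_
    rw [show (lamMax R₀ / lamMin (B * Bᵀ)) * (lamMax S / lamMin S) ^ 2
      = (lamMax R₀ * lamMax S / lamMin (B * Bᵀ)) * (lamMax S * (lamMin S)⁻¹ * (lamMin S)⁻¹) by
        field_simp]
    have h1 : 1 ≤ lamMax R₀ * lamMax S / lamMin (B * Bᵀ) := (one_le_div hbmin).mpr key1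
    exact le_mul_of_one_le_left (by positivity) h1
  refine ⟨goal1, goal2, goal3, fun hPR => ?_⟩
  -- part (iv)
  have hN0 : (R⁻¹ + S).PosDef := hR.inv.add hS
  have hlamN : 0 < lamMax (R⁻¹ + S) := lamMax_pos hd hN0
  have hlamM : 0 < lamMax M := lamMax_pos hd hM
  have hB1 : (M⁻¹ * S * M⁻¹ - lamMin S • (M⁻¹ * M⁻¹)).PosSemidef := by
    have h2 := conj_loe haS M⁻¹
    rw [hMinvT, show M⁻¹ * (lamMin S • 1) * M⁻¹ = lamMin S • (M⁻¹ * M⁻¹) by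
      rw [Matrix.mul_smul, Matrix.mul_one, Matrix.smul_mul]] at h2
    exact h2
  have hMlam : (M⁻¹ - (lamMax M)⁻¹ • 1).PosSemidef := by
    have h2 := inv_loe_inv hM (posdef_smul_one hlamM) (loe_lamMax_smul_one hM.1)
    rwa [smul_one_inv hlamM.ne'] at h2
  have hB2 : (M⁻¹ * M⁻¹ - (lamMax M)⁻¹ • M⁻¹).PosSemidef :=
    sq_loe_of_ge hMinv.posSemidef hMlam
  have hB2' : (lamMin S • (M⁻¹ * M⁻¹) - (lamMin S * (lamMax M)⁻¹) • M⁻¹).PosSemidef := by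
    have h2 := psd_smul ha.le hB2
    rw [smul_sub, smul_smul] at h2
    exact h2
  have hNM : ((R⁻¹ + S) - M).PosSemidef := by
    have e7 : (R⁻¹ + S) - M = R⁻¹ - P⁻¹ := by rw [hMdef]; abel
    rw [e7]; exact inv_loe_inv hR hP hPR
  have hB3 : (M⁻¹ - (R⁻¹ + S)⁻¹).PosSemidef := inv_loe_inv hM hN0 hNM
  have hB3' : ((lamMin S * (lamMax M)⁻¹) • M⁻¹
      - (lamMin S * (lamMax M)⁻¹) • (R⁻¹ + S)⁻¹).PosSemidef :=
    smul_loe (by positivity) hB3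
  have hMN : lamMax M ≤ lamMax (R⁻¹ + S) := lamMax_mono hd hNM
  have key2 : lamMin R₀ * lamMin S ≤ lamMax (B * Bᵀ) := by
    obtain ⟨e, he, hene⟩ := unit_vec hd
    have h1 : lamMin S ≤ e ⬝ᵥ S *ᵥ e := lamMin_le S he
    have hR0i2 : ((lamMin R₀)⁻¹ • 1 - R₀⁻¹).PosSemidef := by
      have h2 := inv_loe_inv (posdef_smul_one hr0min) hR₀ (lamMin_smul_one_loe hR₀.1)
      rwa [smul_one_inv hr0min.ne'] at h2
    have h2 : e ⬝ᵥ S *ᵥ e ≤ (lamMin R₀)⁻¹ * ((B *ᵥ e) ⬝ᵥ (B *ᵥ e)) := by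
      have h3 := hR0i2.dotProduct_mulVec_nonneg (B *ᵥ e)
      rw [S13.star_vec, Matrix.sub_mulVec, dotProduct_sub, Matrix.smul_mulVec,
        Matrix.one_mulVec, dotProduct_smul, smul_eq_mul] at h3
      have e8 : (B *ᵥ e) ⬝ᵥ (R₀⁻¹ *ᵥ (B *ᵥ e)) = e ⬝ᵥ S *ᵥ e := by
        calc (B *ᵥ e) ⬝ᵥ (R₀⁻¹ *ᵥ (B *ᵥ e))
            = (B *ᵥ e) ⬝ᵥ ((R₀⁻¹ * B) *ᵥ e) := by rw [Matrix.mulVec_mulVec]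
          _ = e ⬝ᵥ ((Bᵀ * (R₀⁻¹ * B)) *ᵥ e) := dp_conj B (R₀⁻¹ * B) e e
          _ = e ⬝ᵥ S *ᵥ e := by rw [hSdef, Matrix.mul_assoc]
      linarith [h3, e8]
    have h4 : (B *ᵥ e) ⬝ᵥ (B *ᵥ e) ≤ lamMax (B * Bᵀ) := by
      obtain ⟨z, hz⟩ : ∃ z : Fin d₀ → ℝ, z = B *ᵥ e := ⟨_, rfl⟩
      rw [← hz]
      rcases eq_or_ne z 0 with h0 | hzne
      · rw [h0]; simpa using hbmax.le
      · have hzz : 0 < z ⬝ᵥ z := dp_self_pos hzne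
        have hcs := cs (Bᵀ *ᵥ z) e
        have e9 : (Bᵀ *ᵥ z) ⬝ᵥ e = z ⬝ᵥ z := by
          rw [Matrix.mulVec_transpose, ← Matrix.dotProduct_mulVec, ← hz]
        have e10 : (Bᵀ *ᵥ z) ⬝ᵥ (Bᵀ *ᵥ z) = z ⬝ᵥ (B * Bᵀ) *ᵥ z := by
          calc (Bᵀ *ᵥ z) ⬝ᵥ (Bᵀ *ᵥ z) = z ⬝ᵥ ((Bᵀᵀ * Bᵀ) *ᵥ z) := dp_conj Bᵀ Bᵀ z z
            _ = z ⬝ᵥ (B * Bᵀ) *ᵥ z := by rw [Matrix.transpose_transpose]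
        rw [e9, e10, he, mul_one] at hcs
        have h5 : z ⬝ᵥ (B * Bᵀ) *ᵥ z ≤ lamMax (B * Bᵀ) * (z ⬝ᵥ z) := rayleigh_le _ z
        have h6 : (z ⬝ᵥ z) * (z ⬝ᵥ z) ≤ lamMax (B * Bᵀ) * (z ⬝ᵥ z) := by
          have h7 := hcs.trans h5
          rwa [pow_two] at h7
        exact le_of_mul_le_mul_right h6 hzz
    calc lamMin R₀ * lamMin S ≤ lamMin R₀ * ((lamMin R₀)⁻¹ * ((B *ᵥ e) ⬝ᵥ (B *ᵥ e))) :=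
          mul_le_mul_of_nonneg_left (h1.trans h2) hr0min.le
      _ = (B *ᵥ e) ⬝ᵥ (B *ᵥ e) := by
          rw [← mul_assoc, mul_inv_cancel₀ hr0min.ne', one_mul]
      _ ≤ lamMax (B * Bᵀ) := h4
  have hcc : lamMin R₀ * lamMin S ^ 2 / (lamMax (B * Bᵀ) * lamMax (R⁻¹ + S))
      ≤ lamMin S * (lamMax M)⁻¹ := by
    have step1 : lamMin R₀ * lamMin S ^ 2 / (lamMax (B * Bᵀ) * lamMax (R⁻¹ + S))
        ≤ lamMin S / lamMax (R⁻¹ + S) := by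
      rw [div_le_div_iff₀ (by positivity) (by positivity)]
      have hh := mul_le_mul_of_nonneg_right key2 (mul_nonneg ha.le hlamN.le)
      nlinarith [hh]
    have step2 : lamMin S / lamMax (R⁻¹ + S) ≤ lamMin S * (lamMax M)⁻¹ := by
      rw [div_eq_mul_inv]
      refine mul_le_mul_of_nonneg_left ?_ ha.le
      exact inv_anti₀ hlamM hMN
    exact step1.trans step2
  have hB4 : ((lamMin S * (lamMax M)⁻¹) • (R⁻¹ + S)⁻¹
      - (lamMin R₀ * lamMin S ^ 2 / (lamMax (B * Bᵀ) * lamMax (R⁻¹ + S))) • (R⁻¹ + S)⁻¹).PosSemidef := by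
    rw [← sub_smul]
    exact psd_smul (by linarith) hN0.inv.posSemidef
  have final := loe_trans (loe_trans (loe_trans hB4 hB3') hB2') hB1
  rw [hRhatP]
  exact final
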